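/- Let h : [0,1] → ℝ be the binary entropy function h(p) = −p·ln(p) − (1−p)·ln(1−p), with the convention 0·ln 0 = 0. Then for all p ∈ [0,1], h(p) ≤ 2·√(p·(1−p)); in particular h(p) ≤ 2·√p. -/

import Mathlib

/-- For `0 < t ≤ 1`, `(t - 1/t)/2 ≤ log t`. -/
lemma aux_log_lb {t : ℝ} (ht : 0 < t) (ht1 : t ≤ 1) : (t - 1/t)/2 ≤ Real.log t := by
  set f : ℝ → ℝ := fun t => (t - 1/t)/2 - Real.log t with hf
  have key : MonotoneOn f (Set.Ioi 0) := by
    have hderiv : ∀ x ∈ Set.Ioi (0:ℝ), HasDerivAt f (((1:ℝ) + 1/x^2)/2 - 1/x) x := by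
      intro x hx
      have hx0 : x ≠ 0 := ne_of_gt hx
      have h1 : HasDerivAt (fun y : ℝ => (y - 1/y)/2) (((1:ℝ) + 1/x^2)/2) x := by
        have : HasDerivAt (fun y : ℝ => y - 1/y) ((1:ℝ) + 1/x^2) x := by
          have hinv : HasDerivAt (fun y : ℝ => 1/y) (-(1/x^2)) x := by
            simpa using (hasDerivAt_inv hx0)
          simpa using (hasDerivAt_id x).fun_sub hinv
        simpa [div_eq_mul_inv, mul_comm] using this.div_const 2
      simpa [hf, one_div] using h1.fun_sub (Real.hasDerivAt_log hx0)
    apply monotoneOn_of_deriv_nonneg (convex_Ioi 0)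
    · exact fun x hx => ((hderiv x hx).continuousAt).continuousWithinAt
    · intro x hx
      rw [interior_Ioi] at hx
      exact (hderiv x hx).differentiableAt.differentiableWithinAt
    · intro x hx
      rw [interior_Ioi] at hx
      rw [(hderiv x hx).deriv]
      have hx0 : (0:ℝ) < x := hx
      have h2 : 2 * (1/x) ≤ 1 + 1/x^2 := by
        have e : (1/x)^2 = 1/x^2 := by ring
        nlinarith [sq_nonneg (1 - 1/x), e]
      linarith
  have h01 : f t ≤ f 1 := key (Set.mem_Ioi.mpr ht) (Set.mem_Ioi.mpr one_pos) ht1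
  simp only [hf, Real.log_one] at h01
  norm_num at h01
  rw [one_div]
  linarith

/-- For `x ∈ [0,1]`, `-x log x ≤ √x (1 - x)`. -/
lemma aux_xlogx {x : ℝ} (hx : 0 ≤ x) (hx1 : x ≤ 1) :
    -(x * Real.log x) ≤ Real.sqrt x * (1 - x) := by
  rcases eq_or_lt_of_le hx with h | h
  · simp [← h]
  · set t := Real.sqrt x with ht
    have htpos : 0 < t := Real.sqrt_pos.mpr h
    have ht1 : t ≤ 1 := by
      rw [ht, show (1:ℝ) = Real.sqrt 1 by simp]
      exact Real.sqrt_le_sqrt hx1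
    have htsq : t^2 = x := Real.sq_sqrt hx
    have hlog : Real.log x = 2 * Real.log t := by
      rw [← htsq, Real.log_pow]; push_cast; ring
    have hlb := aux_log_lb htpos ht1
    have : (t - 1/t) ≤ Real.log x := by rw [hlog]; linarith
    have hxpos : 0 < x := h
    -- -(x * log x) ≤ x * (1/t - t) = √x (1-x)
    have h1 : -(x * Real.log x) ≤ x * (1/t - t) := by
      have := mul_le_mul_of_nonneg_left this (le_of_lt hxpos)
      nlinarith
    have h2 : x * (1/t - t) = t * (1 - x) := by
      field_simp
      rw [← htsq]
    linarith [h1, h2.le]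

theorem binary_entropy_le_two_sqrt :
    ∀ p ∈ Set.Icc (0 : ℝ) 1,
      (-(p * Real.log p) - (1 - p) * Real.log (1 - p) ≤ 2 * Real.sqrt (p * (1 - p))) ∧
      (-(p * Real.log p) - (1 - p) * Real.log (1 - p) ≤ 2 * Real.sqrt p) := by
  intro p hp
  obtain ⟨hp0, hp1⟩ := hp
  have hq0 : (0:ℝ) ≤ 1 - p := by linarith
  have hq1 : 1 - p ≤ 1 := by linarith
  have h1 : -(p * Real.log p) ≤ Real.sqrt p * (1 - p) := aux_xlogx hp0 hp1
  have h2 : -((1 - p) * Real.log (1 - p)) ≤ Real.sqrt (1 - p) * p := by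
    simpa using aux_xlogx hq0 hq1
  have e1 : Real.sqrt p * (1 - p) = Real.sqrt (p * (1 - p)) * Real.sqrt (1 - p) := by
    rw [Real.sqrt_mul hp0]
    rw [show Real.sqrt p * Real.sqrt (1-p) * Real.sqrt (1-p)
        = Real.sqrt p * (Real.sqrt (1-p) * Real.sqrt (1-p)) by ring,
      Real.mul_self_sqrt hq0]
  have e2 : Real.sqrt (1 - p) * p = Real.sqrt (p * (1 - p)) * Real.sqrt p := by
    rw [Real.sqrt_mul hp0]
    rw [show Real.sqrt p * Real.sqrt (1-p) * Real.sqrt p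
        = Real.sqrt (1-p) * (Real.sqrt p * Real.sqrt p) by ring,
      Real.mul_self_sqrt hp0]
  have hsp : Real.sqrt p ≤ 1 := Real.sqrt_le_one.mpr hp1
  have hsq : Real.sqrt (1 - p) ≤ 1 := Real.sqrt_le_one.mpr hq1
  have hnn : 0 ≤ Real.sqrt (p * (1 - p)) := Real.sqrt_nonneg _
  have hmain : -(p * Real.log p) - (1 - p) * Real.log (1 - p)
      ≤ 2 * Real.sqrt (p * (1 - p)) := by
    have : -(p * Real.log p) - (1 - p) * Real.log (1 - p)
        ≤ Real.sqrt (p * (1 - p)) * (Real.sqrt (1 - p) + Real.sqrt p) := by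
      rw [mul_add, ← e1, ← e2]; linarith
    calc -(p * Real.log p) - (1 - p) * Real.log (1 - p)
        ≤ Real.sqrt (p * (1 - p)) * (Real.sqrt (1 - p) + Real.sqrt p) := this
      _ ≤ Real.sqrt (p * (1 - p)) * 2 := by
          apply mul_le_mul_of_nonneg_left _ hnn; linarith
      _ = 2 * Real.sqrt (p * (1 - p)) := by ring
  refine ⟨hmain, hmain.trans ?_⟩
  have : Real.sqrt (p * (1 - p)) ≤ Real.sqrt p := by
    apply Real.sqrt_le_sqrt; nlinarith
  linarith
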